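/- Let Γ₁ ≤ E(n) and Γ** = Γ* ∩ Γ₁ where Γ** is a translation subgroup acting only on a subspace V (i.e. its translation vectors lie in V) and Γ** has finite index N in Γ₁. Then for every (g,a) ∈ Γ₁, the component a⊥ of a in V⊥ is zero. -/

import Mathlib

private lemma key_proj (n : ℕ) (V : Submodule ℝ (EuclideanSpace ℝ (Fin n)))
    (γ : EuclideanSpace ℝ (Fin n) ≃ᵢ EuclideanSpace ℝ (Fin n))
    (h : ∀ w ∈ Vᗮ, γ w - γ 0 = w) (x : EuclideanSpace ℝ (Fin n)) :
    (Submodule.orthogonalProjectionOnto Vᗮ (γ x) : EuclideanSpace ℝ (Fin n)) =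
      (Submodule.orthogonalProjectionOnto Vᗮ x : EuclideanSpace ℝ (Fin n))
        + (Submodule.orthogonalProjectionOnto Vᗮ (γ 0) : EuclideanSpace ℝ (Fin n)) := by
  set L := γ.toRealLinearIsometryEquiv with hL
  have happ : ∀ y, γ y = L y + γ 0 := fun y =>
    sub_eq_iff_eq_add.mp (γ.toRealLinearIsometryEquiv_apply y)
  have hfix : ∀ w ∈ Vᗮ, L w = w := by
    intro w hw
    have := h w hw
    have h2 := happ w
    rw [h2] at this
    simpa using this
  have hV : ∀ v ∈ V, L v ∈ V := by
    intro v hv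
    rw [← V.orthogonal_orthogonal]
    intro w hw
    have h2 : inner ℝ (L w) (L v) = (inner ℝ w v : ℝ) := L.inner_map_map w v
    rw [hfix w hw] at h2
    rw [h2, real_inner_comm]
    exact hw v hv
  rw [happ x, map_add]
  congr 1
  have hx : (V.orthogonalProjectionOnto x : EuclideanSpace ℝ (Fin n)) + (Vᗮ.orthogonalProjectionOnto x : EuclideanSpace ℝ (Fin n)) = x :=
    V.starProjection_add_starProjection_orthogonal x
  set v := (Submodule.orthogonalProjectionOnto V x : EuclideanSpace ℝ (Fin n))
  set w := (Submodule.orthogonalProjectionOnto Vᗮ x : EuclideanSpace ℝ (Fin n))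
  have : L x = L v + w := by
    rw [← hfix w (Submodule.coe_mem _), ← map_add, hx]
  rw [this, map_add]
  have h1 : (Submodule.orthogonalProjectionOnto Vᗮ (L v) : EuclideanSpace ℝ (Fin n)) = 0 := by
    have : L v ∈ Vᗮᗮ := V.le_orthogonal_orthogonal (hV v (Submodule.coe_mem _))
    rw [Submodule.orthogonalProjectionOnto_apply_of_mem_orthogonal this,
      Submodule.coe_zero]
  have h2 : (Submodule.orthogonalProjectionOnto Vᗮ w : EuclideanSpace ℝ (Fin n)) = w := by
    have := Submodule.orthogonalProjectionOnto_mem_subspace_eq_self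
      (K := Vᗮ) ⟨w, Submodule.coe_mem _⟩
    exact congrArg Subtype.val this
  simp only [Submodule.coe_add, h1, h2, zero_add]

/-- Let `Γ₁ ≤ E(n)` (the isometry group of `ℝⁿ`) with every element having
rotational part equal to the identity on `Vᗮ`, and let `Γ** ≤ Γ₁` be a subgroup of
finite index `N` all of whose elements are pure translations by vectors in `V`.
Then for every `(g,a) ∈ Γ₁` the component `a⊥` of the translation part `a = γ 0`
in `Vᗮ` is zero. -/
theorem translation_part_perp_zero (n : ℕ)
    (V : Submodule ℝ (EuclideanSpace ℝ (Fin n)))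
    (Γ₁ Γss : Subgroup (EuclideanSpace ℝ (Fin n) ≃ᵢ EuclideanSpace ℝ (Fin n)))
    (hle : Γss ≤ Γ₁)
    (hΓ₁ : ∀ γ ∈ Γ₁, ∀ w ∈ Vᗮ, γ w - γ 0 = w)
    (htrans : ∀ γ ∈ Γss, (∀ x, γ x = x + γ 0) ∧ γ 0 ∈ V)
    (N : ℕ) (hN : N = (Γss.subgroupOf Γ₁).index) (hN0 : N ≠ 0) :
    ∀ γ ∈ Γ₁, (Submodule.orthogonalProjectionOnto Vᗮ (γ 0) : EuclideanSpace ℝ (Fin n)) = 0 := by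
  intro γ hγ
  set H := Γss.subgroupOf Γ₁
  -- the quotient is finite with N elements
  have hcard : Nat.card (Γ₁ ⧸ H) = N := by rw [hN]; rfl
  have hfin : Finite (Γ₁ ⧸ H) := Nat.finite_of_card_ne_zero (by rw [hcard]; exact hN0)
  have := Fintype.ofFinite (Γ₁ ⧸ H)
  set γ' : Γ₁ := ⟨γ, hγ⟩
  -- pigeonhole: two powers in the same coset
  obtain ⟨i, j, hij, heq⟩ := Fintype.exists_ne_map_eq_of_card_lt
    (fun i : Fin (N + 1) => QuotientGroup.mk (s := H) (γ' ^ (i : ℕ)))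
    (by rw [Fintype.card_fin, ← Nat.card_eq_fintype_card, hcard]; omega)
  -- wlog i < j
  wlog hlt : (i : ℕ) < (j : ℕ) generalizing i j
  · exact this j i (Ne.symm hij) heq.symm
      (by rcases Nat.lt_or_ge (j : ℕ) i with h | h
          · exact h
          · exact absurd (Fin.ext (Nat.le_antisymm (Nat.le_of_not_lt hlt) h)) hij.symm)
  set k : ℕ := (j : ℕ) - i
  have hk0 : k ≠ 0 := Nat.sub_ne_zero_of_lt hlt
  have hmem : γ' ^ k ∈ H := by
    have : (γ' ^ (i : ℕ))⁻¹ * γ' ^ (j : ℕ) ∈ H := (QuotientGroup.eq (s := H)).mp heq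
    have hpow : γ' ^ (j : ℕ) = γ' ^ (i : ℕ) * γ' ^ k := by
      rw [← pow_add, Nat.add_sub_cancel' (Nat.le_of_lt hlt)]
    rwa [hpow, inv_mul_cancel_left] at this
  have hmem' : γ ^ k ∈ Γss := by
    have := (Subgroup.mem_subgroupOf).mp hmem
    simpa using this
  -- projection of γ^k 0 is k • projection of γ 0
  have hiter : ∀ m : ℕ,
      (Submodule.orthogonalProjectionOnto Vᗮ ((γ ^ m) 0) : EuclideanSpace ℝ (Fin n)) =
        m • (Submodule.orthogonalProjectionOnto Vᗮ (γ 0) : EuclideanSpace ℝ (Fin n)) := by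
    intro m
    induction m with
    | zero => simp
    | succ m ih =>
      have : (γ ^ (m + 1)) (0 : EuclideanSpace ℝ (Fin n)) = γ ((γ ^ m) 0) := by
        rw [pow_succ']; rfl
      rw [this, key_proj n V γ (hΓ₁ γ hγ), ih, succ_nsmul]
  have hzero : (Submodule.orthogonalProjectionOnto Vᗮ ((γ ^ k) 0) : EuclideanSpace ℝ (Fin n)) = 0 := by
    have hmemV := (htrans _ hmem').2
    have : (γ ^ k) 0 ∈ Vᗮᗮ := V.le_orthogonal_orthogonal hmemV
    rw [Submodule.orthogonalProjectionOnto_apply_of_mem_orthogonal this,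
      Submodule.coe_zero]
  rw [hiter k] at hzero
  have : (k : ℝ) • (Submodule.orthogonalProjectionOnto Vᗮ (γ 0) : EuclideanSpace ℝ (Fin n)) = 0 := by
    rw [Nat.cast_smul_eq_nsmul]; exact hzero
  rcases smul_eq_zero.mp this with h | h
  · exact absurd (Nat.cast_injective (by exact_mod_cast h)) hk0
  · exact h
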